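/- Let Γ, γ, K > 0 be real numbers satisfying K² < Γγ and 2K < Γ + γ. Then the symmetric 2×2 real matrix Q with entries Q₁₁ = Γ²γ/(K(Γ+γ−2K)), Q₁₂ = Q₂₁ = −Γγ/(Γ+γ−2K), Q₂₂ = Γγ²/(K(Γ+γ−2K)) is positive definite. -/

import Mathlib

/-- Condition (7.9): if `K² < Γγ` and `2K < Γ + γ` (with `Γ, γ, K > 0`), the
symmetric matrix `Q` from the quadratic-form representation of the Lyapunov
dissipation is positive definite. -/
theorem stmt_6 (Γ γ K : ℝ) (hΓ : 0 < Γ) (hγ : 0 < γ) (hK : 0 < K)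
    (h1 : K ^ 2 < Γ * γ) (h2 : 2 * K < Γ + γ) :
    Matrix.PosDef
      !![Γ ^ 2 * γ / (K * (Γ + γ - 2 * K)), -(Γ * γ / (Γ + γ - 2 * K));
         -(Γ * γ / (Γ + γ - 2 * K)), Γ * γ ^ 2 / (K * (Γ + γ - 2 * K))] := by
  have hD : 0 < Γ + γ - 2 * K := by linarith
  rw [Matrix.posDef_iff_dotProduct_mulVec]
  constructor
  · ext i j
    fin_cases i <;> fin_cases j <;>
      simp [Matrix.conjTranspose, Matrix.vecHead, Matrix.vecTail]
  · intro x hx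
    have hx01 : x 0 ≠ 0 ∨ x 1 ≠ 0 := by
      by_contra h
      push_neg at h
      apply hx
      ext i
      fin_cases i <;> simp [h.1, h.2]
    simp [Matrix.mulVec, dotProduct, Fin.sum_univ_two]
    have hKD : 0 < K * (Γ + γ - 2 * K) := by positivity
    have key : x 0 * (Γ ^ 2 * γ / (K * (Γ + γ - 2 * K)) * x 0 + -(Γ * γ / (Γ + γ - 2 * K) * x 1)) +
      x 1 * (-(Γ * γ / (Γ + γ - 2 * K) * x 0) + Γ * γ ^ 2 / (K * (Γ + γ - 2 * K)) * x 1)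
        = (Γ * γ * (Γ * (x 0) ^ 2 - 2 * K * (x 0) * (x 1) + γ * (x 1) ^ 2)) / (K * (Γ + γ - 2 * K)) := by
      field_simp
      ring
    rw [key]
    apply div_pos _ hKD
    rcases hx01 with h | h
    · nlinarith [sq_nonneg (γ * x 1 - K * x 0), pow_two_pos_of_ne_zero h, mul_pos (sub_pos.2 h1) (pow_two_pos_of_ne_zero h), mul_pos hΓ hγ]
    · nlinarith [sq_nonneg (Γ * x 0 - K * x 1), pow_two_pos_of_ne_zero h, mul_pos (sub_pos.2 h1) (pow_two_pos_of_ne_zero h), mul_pos hΓ hγ]
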